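/- If f and g are continuous, strictly log-concave, positive functions on the real line, then their convolution h(y) = ∫ f(y-x) g(x) dx is strictly log-concave: for all y₁ ≠ y₂ and 0 < λ < 1, h(λy₁ + (1-λ)y₂) > h(y₁)^λ · h(y₂)^(1-λ). -/

import Mathlib

open MeasureTheory

/-- Strict log-concavity of a positive function on ℝ. -/
def StrictLogConcave (f : ℝ → ℝ) : Prop :=
  ∀ x y l : ℝ, x ≠ y → 0 < l → l < 1 →
    f (l * x + (1 - l) * y) > f x ^ l * f y ^ (1 - l)

open Filter

lemma pair_lt (f : ℝ → ℝ) (hf_pos : ∀ x, 0 < f x) (hf_slc : StrictLogConcave f)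
    {a b c d : ℝ} (hsum : a + b = c + d) (h1 : c < a) (h2 : c < b) :
    f c * f d < f a * f b := by
  have hcd : c < d := by linarith
  have had : a < d := by linarith
  have hbd : b < d := by linarith
  set l : ℝ := (d - a) / (d - c) with hl
  have hdc : (0:ℝ) < d - c := by linarith
  have hl0 : 0 < l := div_pos (by linarith) hdc
  have hl1 : l < 1 := (div_lt_one hdc).2 (by linarith)
  have e1 : l * c + (1 - l) * d = a := by
    rw [hl]; field_simp
    ring
  have e2 : l * d + (1 - l) * c = b := by
    rw [hl]; field_simp
    linear_combination (c - d) * hsum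
  have h1' := hf_slc c d l (ne_of_lt hcd) hl0 hl1
  have h2' := hf_slc d c l (ne_of_gt hcd) hl0 hl1
  rw [e1] at h1'
  rw [e2] at h2'
  have key : ∀ x : ℝ, 0 < x → x ^ l * x ^ (1 - l) = x := by
    intro x hx
    rw [← Real.rpow_add hx]; norm_num
  have hposc := hf_pos c
  have hposd := hf_pos d
  calc f c * f d = (f c ^ l * f d ^ (1 - l)) * (f d ^ l * f c ^ (1 - l)) := by
        rw [show (f c ^ l * f d ^ (1 - l)) * (f d ^ l * f c ^ (1 - l))
            = (f c ^ l * f c ^ (1 - l)) * (f d ^ l * f d ^ (1 - l)) by ring,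
          key _ hposc, key _ hposd]
    _ < f a * f b := by
        apply mul_lt_mul'' h1' h2' <;> positivity

lemma h_wright (f g : ℝ → ℝ)
    (hf_pos : ∀ x, 0 < f x) (hg_pos : ∀ x, 0 < g x)
    (hf_slc : StrictLogConcave f) (hg_slc : StrictLogConcave g)
    (hint : ∀ y : ℝ, Integrable (fun x => f (y - x) * g x))
    (h : ℝ → ℝ) (hh : ∀ y, h y = ∫ x : ℝ, f (y - x) * g x)
    {a b c d : ℝ} (hsum : a + b = c + d) (h1 : c < a) (h2 : c < b) :
    h c * h d < h a * h b := by
  have had : a < d := by linarith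
  set v : ℝ := a - c with hv
  have hv0 : 0 < v := by linarith
  set A : ℝ → ℝ := fun s => f (a - s) * g s with hA
  set B : ℝ → ℝ := fun t => f (d - t) * g (t - v) with hB
  set C : ℝ → ℝ := fun s => f (a - s) * g (s - v) with hC
  set D : ℝ → ℝ := fun t => f (d - t) * g t with hD
  have hAint : Integrable A := hint a
  have hDint : Integrable D := hint d
  have hBint : Integrable B := by
    have := (hint b).comp_sub_right v
    refine this.congr (Filter.Eventually.of_forall fun t => ?_)
    show f (b - (t - v)) * g (t - v) = B t
    rw [hB, show b - (t - v) = d - t by rw [hv]; linarith]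
  have hCint : Integrable C := by
    have := (hint c).comp_sub_right v
    refine this.congr (Filter.Eventually.of_forall fun s => ?_)
    show f (c - (s - v)) * g (s - v) = C s
    rw [hC, show c - (s - v) = a - s by rw [hv]; ring]
  have hAval : (∫ s, A s) = h a := (hh a).symm
  have hDval : (∫ t, D t) = h d := (hh d).symm
  have hBval : (∫ t, B t) = h b := by
    have : (∫ t, (fun x => f (b - x) * g x) (t - v)) = ∫ x, f (b - x) * g x :=
      integral_sub_right_eq_self (fun x => f (b - x) * g x) v
    rw [← hh b] at this
    rw [← this]
    congr 1; funext t
    show B t = f (b - (t - v)) * g (t - v)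
    rw [hB, show b - (t - v) = d - t by rw [hv]; linarith]
  have hCval : (∫ s, C s) = h c := by
    have : (∫ s, (fun x => f (c - x) * g x) (s - v)) = ∫ x, f (c - x) * g x :=
      integral_sub_right_eq_self (fun x => f (c - x) * g x) v
    rw [← hh c] at this
    rw [← this]
    congr 1; funext s
    show C s = f (c - (s - v)) * g (s - v)
    rw [hC, show c - (s - v) = a - s by rw [hv]; ring]
  set T : ℝ × ℝ → ℝ := fun p =>
    (f (a - p.1) * f (d - p.2) - f (a - p.2) * f (d - p.1)) *
      (g p.1 * g (p.2 - v) - g p.2 * g (p.1 - v)) with hT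
  have hTexp : ∀ p : ℝ × ℝ,
      T p = A p.1 * B p.2 - C p.1 * D p.2 - D p.1 * C p.2 + B p.1 * A p.2 := by
    intro p
    simp only [hT, hA, hB, hC, hD]
    ring
  have hcomb : Integrable (fun p : ℝ × ℝ =>
      A p.1 * B p.2 - C p.1 * D p.2 - D p.1 * C p.2 + B p.1 * A p.2) := by
    rw [MeasureTheory.Measure.volume_eq_prod]
    exact (((hAint.mul_prod hBint).sub (hCint.mul_prod hDint)).sub
      (hDint.mul_prod hCint)).add (hBint.mul_prod hAint)
  have hTint : Integrable T := by
    refine hcomb.congr (Filter.Eventually.of_forall fun p => (hTexp p).symm)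
  have hTlt : ∀ s t : ℝ, s < t → 0 < T (s, t) := by
    intro s t hst
    have hbf : f (a - t) * f (d - s) < f (a - s) * f (d - t) :=
      pair_lt f hf_pos hf_slc (by ring) (by linarith) (by linarith)
    have hbg : g (s - v) * g t < g s * g (t - v) :=
      pair_lt g hg_pos hg_slc (by ring) (by linarith) (by linarith)
    have : 0 < (f (a - s) * f (d - t) - f (a - t) * f (d - s)) := by linarith
    have hg' : 0 < (g s * g (t - v) - g t * g (s - v)) := by
      have : g (s - v) * g t = g t * g (s - v) := by ring
      linarith [hbg, this]
    simp only [hT]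
    exact mul_pos ‹0 < (f (a - s) * f (d - t) - f (a - t) * f (d - s))› hg'
  have hT0 : ∀ p : ℝ × ℝ, 0 ≤ T p := by
    rintro ⟨s, t⟩
    rcases lt_trichotomy s t with hst | hst | hst
    · exact le_of_lt (hTlt s t hst)
    · subst hst
      simp only [hT]
      have : f (a - s) * f (d - s) - f (a - s) * f (d - s) = 0 := by ring
      rw [this, zero_mul]
    · -- t < s : both brackets negative
      have hbf : f (a - s) * f (d - t) < f (a - t) * f (d - s) :=
        pair_lt f hf_pos hf_slc (by ring) (by linarith) (by linarith)
      have hbg : g (t - v) * g s < g t * g (s - v) :=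
        pair_lt g hg_pos hg_slc (by ring) (by linarith) (by linarith)
      simp only [hT]
      apply le_of_lt
      apply mul_pos_of_neg_of_neg
      · nlinarith [hbf]
      · nlinarith [hbg]
  have hsupp : 0 < (volume : Measure (ℝ × ℝ)) (Function.support T) := by
    have hsub : (Set.Ioo (0:ℝ) 1) ×ˢ (Set.Ioo (2:ℝ) 3) ⊆ Function.support T := by
      rintro ⟨s, t⟩ ⟨hs, ht⟩
      exact ne_of_gt (hTlt s t (by simp at hs ht ⊢; linarith [hs.2, ht.1]))
    calc (0:ENNReal) < 1 := by norm_num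
      _ = (volume : Measure (ℝ × ℝ)) ((Set.Ioo (0:ℝ) 1) ×ˢ (Set.Ioo (2:ℝ) 3)) := by
          rw [MeasureTheory.Measure.volume_eq_prod, Measure.prod_prod]
          rw [Real.volume_Ioo, Real.volume_Ioo]
          norm_num
      _ ≤ _ := measure_mono hsub
  have hTpos : 0 < ∫ p : ℝ × ℝ, T p :=
    (integral_pos_iff_support_of_nonneg hT0 hTint).2 hsupp
  have hval : (∫ p : ℝ × ℝ, T p) = 2 * (h a * h b - h c * h d) := by
    have e1 : (∫ p : ℝ × ℝ, T p) = ∫ p : ℝ × ℝ,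
        (A p.1 * B p.2 - C p.1 * D p.2 - D p.1 * C p.2 + B p.1 * A p.2) :=
      integral_congr_ae (Filter.Eventually.of_forall hTexp)
    rw [e1, MeasureTheory.Measure.volume_eq_prod]
    have i1 : Integrable (fun p : ℝ × ℝ => A p.1 * B p.2) (volume.prod volume) :=
      hAint.mul_prod hBint
    have i2 : Integrable (fun p : ℝ × ℝ => C p.1 * D p.2) (volume.prod volume) :=
      hCint.mul_prod hDint
    have i3 : Integrable (fun p : ℝ × ℝ => D p.1 * C p.2) (volume.prod volume) :=
      hDint.mul_prod hCint
    have i4 : Integrable (fun p : ℝ × ℝ => B p.1 * A p.2) (volume.prod volume) :=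
      hBint.mul_prod hAint
    have e2 : Integrable (fun p : ℝ × ℝ => A p.1 * B p.2 - C p.1 * D p.2)
        (volume.prod volume) := i1.sub i2
    have e3 : Integrable (fun p : ℝ × ℝ => A p.1 * B p.2 - C p.1 * D p.2 - D p.1 * C p.2)
        (volume.prod volume) := e2.sub i3
    rw [show (fun p : ℝ × ℝ => A p.1 * B p.2 - C p.1 * D p.2 - D p.1 * C p.2 + B p.1 * A p.2)
        = (fun p : ℝ × ℝ => (A p.1 * B p.2 - C p.1 * D p.2 - D p.1 * C p.2) + B p.1 * A p.2)
        from rfl] at *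
    rw [integral_add e3 i4, integral_sub e2 i3, integral_sub i1 i2,
      integral_prod_mul, integral_prod_mul, integral_prod_mul, integral_prod_mul,
      hAval, hBval, hCval, hDval]
    ring
  rw [hval] at hTpos
  linarith

lemma h_pos (f g : ℝ → ℝ)
    (hf_pos : ∀ x, 0 < f x) (hg_pos : ∀ x, 0 < g x)
    (hint : ∀ y : ℝ, Integrable (fun x => f (y - x) * g x))
    (h : ℝ → ℝ) (hh : ∀ y, h y = ∫ x : ℝ, f (y - x) * g x) (y : ℝ) :
    0 < h y := by
  rw [hh]
  refine (integral_pos_iff_support_of_nonneg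
    (fun x => (mul_pos (hf_pos _) (hg_pos _)).le) (hint y)).2 ?_
  have : Function.support (fun x => f (y - x) * g x) = Set.univ :=
    Set.eq_univ_iff_forall.2 fun x => ne_of_gt (mul_pos (hf_pos _) (hg_pos _))
  rw [this, Real.volume_univ]
  exact ENNReal.zero_lt_top

lemma h_lower (f g : ℝ → ℝ)
    (hf_cont : Continuous f) (hg_cont : Continuous g)
    (hf_pos : ∀ x, 0 < f x) (hg_pos : ∀ x, 0 < g x)
    (hint : ∀ y : ℝ, Integrable (fun x => f (y - x) * g x))
    (h : ℝ → ℝ) (hh : ∀ y, h y = ∫ x : ℝ, f (y - x) * g x)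
    (c d : ℝ) (hcd : c ≤ d) :
    ∃ ε > 0, ∀ y ∈ Set.Icc c d, ε ≤ h y := by
  set F : ℝ × ℝ → ℝ := fun p => f (p.1 - p.2) * g p.2 with hF
  have hFcont : Continuous F :=
    (hf_cont.comp (continuous_fst.sub continuous_snd)).mul (hg_cont.comp continuous_snd)
  have hK : IsCompact (Set.Icc c d ×ˢ Set.Icc (0:ℝ) 1) := isCompact_Icc.prod isCompact_Icc
  have hne : (Set.Icc c d ×ˢ Set.Icc (0:ℝ) 1).Nonempty :=
    ⟨(c, 0), by constructor <;> simp [hcd]⟩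
  obtain ⟨p₀, hp₀, hmin⟩ := hK.exists_isMinOn hne hFcont.continuousOn
  refine ⟨F p₀, mul_pos (hf_pos _) (hg_pos _), fun y hy => ?_⟩
  have step1 : F p₀ ≤ ∫ x in Set.Icc (0:ℝ) 1, f (y - x) * g x := by
    have := setIntegral_ge_of_const_le_real (μ := volume) (s := Set.Icc (0:ℝ) 1)
      (f := fun x => f (y - x) * g x) measurableSet_Icc
      (by rw [Real.volume_Icc]; norm_num)
      (fun x hx => by exact hmin (Set.mk_mem_prod hy hx))
      ((hint y).integrableOn)
    rw [Real.volume_real_Icc] at this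
    norm_num at this
    exact this
  have step2 : (∫ x in Set.Icc (0:ℝ) 1, f (y - x) * g x) ≤ ∫ x, f (y - x) * g x :=
    setIntegral_le_integral (hint y)
      (Filter.Eventually.of_forall fun x => (mul_pos (hf_pos _) (hg_pos _)).le)
  rw [hh]
  linarith

lemma wright_continuous (ψ : ℝ → ℝ)
    (hW : ∀ a b c d : ℝ, a + b = c + d → c < a → c < b → ψ c + ψ d < ψ a + ψ b)
    (hbd : ∀ c d : ℝ, c ≤ d → ∃ m M : ℝ, ∀ u ∈ Set.Icc c d, m ≤ ψ u ∧ ψ u ≤ M) :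
    Continuous ψ := by
  rw [continuous_iff_continuousAt]
  intro y₀
  obtain ⟨m, M, hmM⟩ := hbd (y₀ - 2) (y₀ + 2) (by linarith)
  set B : ℝ := M - m with hB
  have hB0 : 0 ≤ B := by
    obtain ⟨h1, h2⟩ := hmM y₀ (by constructor <;> linarith)
    linarith
  -- key increment estimate
  have key : ∀ (n : ℕ) (x δ : ℝ), 1 ≤ n → y₀ - 1 ≤ x → x ≤ y₀ + 1 → 0 < δ →
      δ * (n + 1) ≤ 1 → |ψ (x + δ) - ψ x| ≤ B / n := by
    intro n x δ hn hx1 hx2 hδ hδn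
    have hnR : (1:ℝ) ≤ (n:ℝ) := by exact_mod_cast hn
    have hδ1 : δ * n ≤ 1 := by nlinarith
    have hmem : ∀ z : ℝ, y₀ - 2 ≤ z → z ≤ y₀ + 2 → m ≤ ψ z ∧ ψ z ≤ M :=
      fun z h1 h2 => hmM z ⟨h1, h2⟩
    rw [abs_le]
    constructor
    · -- lower bound : -(B/n) ≤ ψ(x+δ) - ψ x
      -- sum over increments to the right
      have tel : ∑ i ∈ Finset.range n, (ψ (x + δ + (i+1) * δ) - ψ (x + δ + i * δ))
          = ψ (x + δ + n * δ) - ψ (x + δ + 0 * δ) := by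
        have := Finset.sum_range_sub (fun k : ℕ => ψ (x + δ + k * δ)) n
        simpa using this
      have hterm : ∀ i ∈ Finset.range n,
          ψ (x + δ + (i+1) * δ) - ψ (x + δ + i * δ) ≤ ψ (x + δ) - ψ x := by
        intro i _
        have hi0 : (0:ℝ) ≤ (i:ℝ) := by positivity
        have := hW (x + δ + i * δ) (x + δ) x (x + δ + (i+1) * δ)
          (by ring) (by nlinarith) (by nlinarith)
        linarith
      have hsum : ψ (x + δ + n * δ) - ψ (x + δ + 0 * δ) ≤ n * (ψ (x + δ) - ψ x) := by
        rw [← tel]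
        calc ∑ i ∈ Finset.range n, (ψ (x + δ + (i+1) * δ) - ψ (x + δ + i * δ))
            ≤ ∑ i ∈ Finset.range n, (ψ (x + δ) - ψ x) := Finset.sum_le_sum hterm
          _ = n * (ψ (x + δ) - ψ x) := by
              rw [Finset.sum_const, Finset.card_range]; ring
      have e1 : m ≤ ψ (x + δ + n * δ) :=
        (hmem _ (by nlinarith) (by nlinarith)).1
      have e2 : ψ (x + δ + 0 * δ) ≤ M := by
        have := (hmem (x + δ) (by nlinarith) (by nlinarith)).2
        simpa using this
      rw [neg_le, le_div_iff₀ (by linarith : (0:ℝ) < (n:ℝ))]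
      nlinarith
    · -- upper bound : ψ(x+δ) - ψ x ≤ B/n
      have tel : ∑ i ∈ Finset.range n, (ψ (x - i * δ) - ψ (x - (i+1) * δ))
          = ψ (x - 0 * δ) - ψ (x - n * δ) := by
        have := Finset.sum_range_sub' (fun k : ℕ => ψ (x - k * δ)) n
        simpa using this
      have hterm : ∀ i ∈ Finset.range n,
          ψ (x + δ) - ψ x ≤ ψ (x - i * δ) - ψ (x - (i+1) * δ) := by
        intro i _
        have hi0 : (0:ℝ) ≤ (i:ℝ) := by positivity
        have := hW (x - i * δ) x (x - (i+1) * δ) (x + δ)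
          (by ring) (by nlinarith) (by nlinarith)
        linarith
      have hsum : n * (ψ (x + δ) - ψ x) ≤ ψ (x - 0 * δ) - ψ (x - n * δ) := by
        rw [← tel]
        calc (n:ℝ) * (ψ (x + δ) - ψ x)
            = ∑ i ∈ Finset.range n, (ψ (x + δ) - ψ x) := by
              rw [Finset.sum_const, Finset.card_range]; ring
          _ ≤ _ := Finset.sum_le_sum hterm
      have e1 : m ≤ ψ (x - n * δ) := (hmem _ (by nlinarith) (by nlinarith)).1
      have e2 : ψ (x - 0 * δ) ≤ M := by
        have := (hmem x (by nlinarith) (by nlinarith)).2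
        simpa using this
      rw [le_div_iff₀ (by linarith : (0:ℝ) < (n:ℝ))]
      nlinarith
  -- conclude continuity at y₀
  rw [Metric.continuousAt_iff]
  intro ε hε
  obtain ⟨n, hn1, hnB⟩ : ∃ n : ℕ, 1 ≤ n ∧ B / n < ε := by
    obtain ⟨n, hn⟩ := exists_nat_gt (B / ε)
    refine ⟨n + 1, Nat.le_add_left _ _, ?_⟩
    have hpos : (0:ℝ) < (n:ℝ) + 1 := by positivity
    have hn' : B < ((n:ℝ) + 1) * ε := by
      rw [div_lt_iff₀ hε] at hn
      nlinarith [hε]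
    rw [div_lt_iff₀ (by push_cast; linarith : (0:ℝ) < ((n + 1 : ℕ) : ℝ))]
    push_cast
    linarith
  refine ⟨1 / (n + 1), by positivity, fun {z} hz => ?_⟩
  rw [Real.dist_eq] at hz ⊢
  rcases lt_trichotomy z y₀ with hzy | hzy | hzy
  · -- z < y₀
    have hδ : 0 < y₀ - z := by linarith
    have habs : y₀ - z < 1 / (n + 1) := by
      rw [abs_sub_lt_iff] at hz; linarith [hz.2]
    have hn1' : (1:ℝ) ≤ (n:ℝ) := by exact_mod_cast hn1
    have hz1 : y₀ - 1 ≤ z := by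
      have : 1 / ((n:ℝ) + 1) ≤ 1 := by
        rw [div_le_one (by linarith)]; linarith
      linarith
    have := key n z (y₀ - z) hn1 hz1 (by linarith) hδ
      (by rw [← le_div_iff₀ (by linarith : (0:ℝ) < (n:ℝ)+1)] at *; linarith)
    rw [show z + (y₀ - z) = y₀ by ring] at this
    calc |ψ z - ψ y₀| = |ψ y₀ - ψ z| := abs_sub_comm _ _
      _ ≤ B / n := this
      _ < ε := hnB
  · rw [hzy]; simpa using hε
  · -- y₀ < z
    have hδ : 0 < z - y₀ := by linarith
    have habs : z - y₀ < 1 / (n + 1) := by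
      rw [abs_sub_lt_iff] at hz; linarith [hz.1]
    have hn1' : (1:ℝ) ≤ (n:ℝ) := by exact_mod_cast hn1
    have := key n y₀ (z - y₀) hn1 (by linarith) (by linarith) hδ
      (by rw [← le_div_iff₀ (by linarith : (0:ℝ) < (n:ℝ)+1)] at *; linarith)
    rw [show y₀ + (z - y₀) = z by ring] at this
    calc |ψ z - ψ y₀| ≤ B / n := this
      _ < ε := hnB

lemma wright_concave (ψ : ℝ → ℝ) (hcont : Continuous ψ)
    (hW : ∀ a b c d : ℝ, a + b = c + d → c < a → c < b → ψ c + ψ d < ψ a + ψ b)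
    (x y : ℝ) :
    ∀ l : ℝ, 0 ≤ l → l ≤ 1 → l * ψ x + (1 - l) * ψ y ≤ ψ (l * x + (1 - l) * y) := by
  have hmid : ∀ l₁ l₂ : ℝ,
      (l₁ * ψ x + (1 - l₁) * ψ y ≤ ψ (l₁ * x + (1 - l₁) * y)) →
      (l₂ * ψ x + (1 - l₂) * ψ y ≤ ψ (l₂ * x + (1 - l₂) * y)) →
      ((l₁ + l₂)/2) * ψ x + (1 - (l₁ + l₂)/2) * ψ y
        ≤ ψ (((l₁ + l₂)/2) * x + (1 - (l₁ + l₂)/2) * y) := by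
    intro l₁ l₂ h₁ h₂
    set p₁ := l₁ * x + (1 - l₁) * y with hp₁
    set p₂ := l₂ * x + (1 - l₂) * y with hp₂
    have hψm : (ψ p₁ + ψ p₂) / 2 ≤ ψ ((p₁ + p₂) / 2) := by
      rcases lt_trichotomy p₁ p₂ with hpp | hpp | hpp
      · have := hW ((p₁ + p₂)/2) ((p₁ + p₂)/2) p₁ p₂ (by ring) (by linarith) (by linarith)
        linarith
      · rw [hpp, show (p₂ + p₂)/2 = p₂ by ring]
        linarith
      · have := hW ((p₁ + p₂)/2) ((p₁ + p₂)/2) p₂ p₁ (by ring) (by linarith) (by linarith)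
        linarith
    rw [show ((l₁ + l₂)/2) * x + (1 - (l₁ + l₂)/2) * y = (p₁ + p₂)/2 by rw [hp₁, hp₂]; ring]
    linarith
  have hdy : ∀ n : ℕ, ∀ k : ℕ, k ≤ 2 ^ n →
      ((k:ℝ)/2^n) * ψ x + (1 - (k:ℝ)/2^n) * ψ y
        ≤ ψ (((k:ℝ)/2^n) * x + (1 - (k:ℝ)/2^n) * y) := by
    intro n
    induction n with
    | zero =>
      intro k hk
      interval_cases k <;> norm_num
    | succ n ih =>
      intro k hk
      have h2 : 2 ^ (n + 1) = 2 * 2 ^ n := by rw [pow_succ]; ring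
      rcases Nat.even_or_odd k with ⟨j, hj⟩ | ⟨j, hj⟩
      · have hj' : j ≤ 2 ^ n := by omega
        have e : ((k : ℝ)) / 2 ^ (n+1) = (j : ℝ) / 2 ^ n := by
          have : (k : ℝ) = 2 * (j : ℝ) := by exact_mod_cast congrArg Nat.cast (by omega : k = 2 * j)
          rw [this, pow_succ]
          field_simp
        rw [e]
        exact ih j hj'
      · have hj' : j + 1 ≤ 2 ^ n := by omega
        have e : ((k : ℝ)) / 2 ^ (n+1) = ((j : ℝ) / 2 ^ n + ((j + 1 : ℕ) : ℝ) / 2 ^ n) / 2 := by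
          have : (k : ℝ) = 2 * (j : ℝ) + 1 := by exact_mod_cast congrArg Nat.cast (by omega : k = 2 * j + 1)
          rw [this, pow_succ]
          push_cast
          field_simp
          ring
        rw [e]
        exact hmid _ _ (ih j (by omega)) (ih (j+1) hj')
  intro l hl0 hl1
  set a : ℕ → ℝ := fun n => ((⌊l * 2 ^ n⌋₊ : ℕ) : ℝ) / 2 ^ n with ha
  have h2pos : ∀ n : ℕ, (0:ℝ) < 2 ^ n := fun n => pow_pos (by norm_num) n
  have hPa : ∀ n, (a n) * ψ x + (1 - a n) * ψ y ≤ ψ ((a n) * x + (1 - a n) * y) := by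
    intro n
    refine hdy n _ ?_
    have h1 : l * 2 ^ n ≤ ((2 ^ n : ℕ) : ℝ) := by
      push_cast; nlinarith [h2pos n]
    calc ⌊l * 2 ^ n⌋₊ ≤ ⌊((2 ^ n : ℕ) : ℝ)⌋₊ := Nat.floor_mono h1
      _ = 2 ^ n := Nat.floor_natCast _
  have hup : ∀ n, a n ≤ l := by
    intro n
    rw [ha]
    simp only
    rw [div_le_iff₀ (h2pos n)]
    exact Nat.floor_le (by positivity)
  have hlow : ∀ n, l - (1/2 : ℝ) ^ n ≤ a n := by
    intro n
    rw [ha]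
    simp only
    rw [le_div_iff₀ (h2pos n)]
    have h1 := Nat.lt_floor_add_one (l * 2 ^ n)
    have hpow : ((1:ℝ)/2) ^ n * 2 ^ n = 1 := by
      rw [div_pow, one_pow]
      field_simp
    nlinarith [h1]
  have ha_tendsto : Tendsto a atTop (nhds l) := by
    have hl2 : Tendsto (fun n : ℕ => l - (1/2 : ℝ) ^ n) atTop (nhds (l - 0)) :=
      tendsto_const_nhds.sub (tendsto_pow_atTop_nhds_zero_of_lt_one (by norm_num) (by norm_num))
    rw [sub_zero] at hl2
    exact tendsto_of_tendsto_of_tendsto_of_le_of_le hl2 tendsto_const_nhds hlow hup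
  have hΦcont : Continuous (fun t : ℝ => ψ (t * x + (1 - t) * y) - (t * ψ x + (1 - t) * ψ y)) := by
    apply Continuous.sub
    · exact hcont.comp (by continuity)
    · continuity
  have hΦa : Tendsto (fun n => ψ (a n * x + (1 - a n) * y) - (a n * ψ x + (1 - a n) * ψ y))
      atTop (nhds (ψ (l * x + (1 - l) * y) - (l * ψ x + (1 - l) * ψ y))) :=
    (hΦcont.tendsto l).comp ha_tendsto
  have hge : 0 ≤ ψ (l * x + (1 - l) * y) - (l * ψ x + (1 - l) * ψ y) :=
    ge_of_tendsto' hΦa (fun n => by linarith [hPa n])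
  linarith


theorem convolution_strictLogConcave
    (f g : ℝ → ℝ)
    (hf_cont : Continuous f) (hg_cont : Continuous g)
    (hf_pos : ∀ x, 0 < f x) (hg_pos : ∀ x, 0 < g x)
    (hf_slc : StrictLogConcave f) (hg_slc : StrictLogConcave g)
    (hint : ∀ y : ℝ, Integrable (fun x => f (y - x) * g x))
    (h : ℝ → ℝ) (hh : ∀ y, h y = ∫ x : ℝ, f (y - x) * g x) :
    StrictLogConcave h := by
  have hpos : ∀ y, 0 < h y := h_pos f g hf_pos hg_pos hint h hh
  set ψ : ℝ → ℝ := fun y => Real.log (h y) with hψ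
  have hψW : ∀ a b c d : ℝ, a + b = c + d → c < a → c < b → ψ c + ψ d < ψ a + ψ b := by
    intro a b c d hsum h1 h2
    have hw := h_wright f g hf_pos hg_pos hf_slc hg_slc hint h hh hsum h1 h2
    have := Real.log_lt_log (mul_pos (hpos c) (hpos d)) hw
    rw [Real.log_mul (ne_of_gt (hpos c)) (ne_of_gt (hpos d)),
      Real.log_mul (ne_of_gt (hpos a)) (ne_of_gt (hpos b))] at this
    exact this
  have hbd : ∀ c d : ℝ, c ≤ d → ∃ m M : ℝ, ∀ u ∈ Set.Icc c d, m ≤ ψ u ∧ ψ u ≤ M := by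
    intro c d hcd
    obtain ⟨ε₁, hε₁, hlb₁⟩ := h_lower f g hf_cont hg_cont hf_pos hg_pos hint h hh c d hcd
    obtain ⟨ε₂, hε₂, hlb₂⟩ := h_lower f g hf_cont hg_cont hf_pos hg_pos hint h hh
      (2*(c-1) - d) (c-1) (by linarith)
    have hc1 := hpos (c-1)
    have hMpos : 0 < h (c-1) * h (c-1) / ε₂ := by positivity
    refine ⟨Real.log ε₁, Real.log (h (c-1) * h (c-1) / ε₂), fun u hu => ?_⟩
    obtain ⟨hu1, hu2⟩ := hu
    constructor
    · exact Real.log_le_log hε₁ (hlb₁ u ⟨hu1, hu2⟩)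
    · refine Real.log_le_log (hpos u) ?_
      have hw := h_wright f g hf_pos hg_pos hf_slc hg_slc hint h hh
        (a := c-1) (b := c-1) (c := 2*(c-1) - u) (d := u)
        (by ring) (by linarith) (by linarith)
      have hmem : ε₂ ≤ h (2*(c-1) - u) := hlb₂ _ ⟨by linarith, by linarith⟩
      rw [le_div_iff₀ hε₂]
      nlinarith [hpos u, hpos (2*(c-1) - u), hpos (c-1)]
  have hψcont : Continuous ψ := wright_continuous ψ hψW hbd
  have hconc := wright_concave ψ hψcont hψW
  have hsm : ∀ u w : ℝ, u ≠ w → (ψ u + ψ w)/2 < ψ ((u+w)/2) := by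
    intro u w huw
    rcases lt_or_gt_of_ne huw with huw' | huw'
    · have := hψW ((u+w)/2) ((u+w)/2) u w (by ring) (by linarith) (by linarith)
      linarith
    · have := hψW ((u+w)/2) ((u+w)/2) w u (by ring) (by linarith) (by linarith)
      linarith
  intro x y l hxy hl0 hl1
  have key : l * ψ x + (1 - l) * ψ y < ψ (l * x + (1 - l) * y) := by
    rcases lt_trichotomy l (1/2) with hl | hl | hl
    · have hc := hconc ((x+y)/2) y (2*l) (by linarith) (by linarith)
      have hmain := hsm x y hxy
      have hmul : (2*l) * ((ψ x + ψ y)/2) < (2*l) * ψ ((x+y)/2) :=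
        mul_lt_mul_of_pos_left hmain (by linarith)
      rw [show (2*l) * ((x+y)/2) + (1 - 2*l) * y = l * x + (1 - l) * y by ring] at hc
      nlinarith [hc, hmul]
    · rw [show l * x + (1 - l) * y = (x + y)/2 by rw [hl]; ring]
      have := hsm x y hxy
      rw [hl]
      linarith
    · have hc := hconc ((x+y)/2) x (2*(1-l)) (by linarith) (by linarith)
      have hmain := hsm x y hxy
      have hmul : (2*(1-l)) * ((ψ x + ψ y)/2) < (2*(1-l)) * ψ ((x+y)/2) :=
        mul_lt_mul_of_pos_left hmain (by linarith)
      rw [show (2*(1-l)) * ((x+y)/2) + (1 - 2*(1-l)) * x = l * x + (1 - l) * y by ring] at hc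
      nlinarith [hc, hmul]
  have e1 : h x ^ l * h y ^ (1 - l) = Real.exp (l * ψ x + (1 - l) * ψ y) := by
    rw [Real.rpow_def_of_pos (hpos x), Real.rpow_def_of_pos (hpos y), ← Real.exp_add]
    congr 1
    rw [hψ]
    ring
  have e2 : h (l * x + (1 - l) * y) = Real.exp (ψ (l * x + (1 - l) * y)) := by
    rw [hψ, Real.exp_log (hpos _)]
  rw [gt_iff_lt, e1, e2]
  exact Real.exp_lt_exp.2 key
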